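/- Let M be an n×n real symmetric positive definite matrix with M_{ij} ≤ 0 for all i ≠ j. Then (M⁻¹)_{ii} > 0 for every index i, and if i, j are indices for which there exist k₀ = i, k₁, …, k_r = j with M_{k_t k_{t+1}} ≠ 0 for all 0 ≤ t < r, then (M⁻¹)_{ij} > 0. -/

import Mathlib

open Matrix

/-- For a real symmetric positive definite matrix with nonpositive off-diagonal
entries, the diagonal entries of the inverse are strictly positive, and the
(i,j) entry of the inverse is strictly positive whenever j is reachable from i
by a walk along nonzero entries of M. -/
theorem stmt1 {n : ℕ} (M : Matrix (Fin n) (Fin n) ℝ)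
    (hsym : Mᵀ = M)
    (hpd : ∀ x : Fin n → ℝ, x ≠ 0 → 0 < x ⬝ᵥ M.mulVec x)
    (hZ : ∀ i j : Fin n, i ≠ j → M i j ≤ 0) :
    (∀ i : Fin n, 0 < M⁻¹ i i) ∧
    (∀ i j : Fin n,
      (∃ (r : ℕ) (k : ℕ → Fin n), k 0 = i ∧ k r = j ∧
        ∀ t : ℕ, t < r → M (k t) (k (t + 1)) ≠ 0) →
      0 < M⁻¹ i j) := by
  have hM : M.PosDef := by
    refine Matrix.PosDef.of_dotProduct_mulVec_pos ?_ ?_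
    · show Mᴴ = M
      simpa using hsym
    · intro x hx
      simpa using hpd x hx
  have hMul : M * M⁻¹ = 1 := mul_nonsing_inv M hM.det_pos.ne'.isUnit
  -- diagonal entries of M on the diagonal are positive
  have hMdiag : ∀ i, 0 < M i i := by
    intro i
    have := hpd (Pi.single i 1) (by
      intro h
      have := congrFun h i
      simp [Pi.single_apply] at this)
    simpa [dotProduct, mulVec, Pi.single_apply] using this
  -- nonnegativity of M⁻¹
  have hnonneg : ∀ i j, 0 ≤ M⁻¹ i j := by
    intro i0 j
    set x : Fin n → ℝ := fun i => M⁻¹ i j with hx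
    have hMx : ∀ i, M.mulVec x i = (1 : Matrix (Fin n) (Fin n) ℝ) i j := by
      intro i
      have : (M * M⁻¹) i j = (1 : Matrix (Fin n) (Fin n) ℝ) i j := by rw [hMul]
      simpa [Matrix.mul_apply, mulVec, dotProduct] using this
    set y : Fin n → ℝ := fun i => max (-(x i)) 0 with hy
    set z : Fin n → ℝ := fun i => max (x i) 0 with hz
    have hy0 : ∀ i, 0 ≤ y i := fun i => le_max_right _ _
    have hz0 : ∀ i, 0 ≤ z i := fun i => le_max_right _ _
    have hxyz : z = x + y := by
      funext i
      simp only [hz, hy, Pi.add_apply]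
      rcases le_total (x i) 0 with h | h
      · rw [max_eq_right h, max_eq_left (by linarith)]; ring
      · rw [max_eq_left h, max_eq_right (by linarith)]; ring
    have hyz : ∀ i, y i * z i = 0 := by
      intro i
      rcases le_total (x i) 0 with h | h
      · simp [hy, hz, max_eq_right h]
      · simp [hy, hz, max_eq_right (neg_nonpos.mpr h)]
    have hyMz : y ⬝ᵥ M.mulVec z ≤ 0 := by
      rw [dotProduct]
      apply Finset.sum_nonpos
      intro i _
      rw [mulVec, dotProduct, Finset.mul_sum]
      apply Finset.sum_nonpos
      intro k _
      rcases eq_or_ne i k with rfl | hik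
      · have h := hyz i
        have : y i * (M i i * z i) = M i i * (y i * z i) := by ring
        rw [this, h, mul_zero]
      · have h1 := hZ i k hik
        have := mul_nonneg (hy0 i) (hz0 k)
        nlinarith
    have hyMx : 0 ≤ y ⬝ᵥ M.mulVec x := by
      rw [dotProduct]
      apply Finset.sum_nonneg
      intro i _
      rw [hMx i]
      rcases eq_or_ne i j with rfl | h
      · simp [hy0 i]
      · simp [Matrix.one_apply_ne h]
    have hyMy : y ⬝ᵥ M.mulVec y ≤ 0 := by
      have : M.mulVec z = M.mulVec x + M.mulVec y := by rw [hxyz, mulVec_add]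
      have h2 : y ⬝ᵥ M.mulVec z = y ⬝ᵥ M.mulVec x + y ⬝ᵥ M.mulVec y := by
        rw [this, dotProduct_add]
      linarith
    have hy_eq : y = 0 := by
      by_contra h
      exact absurd (hpd y h) (not_lt.mpr hyMy)
    have := congrFun hy_eq i0
    simp only [hy, Pi.zero_apply] at this
    have : -(x i0) ≤ 0 := by
      rcases le_max_left (-(x i0)) 0 with h
      rw [this] at h; exact h
    simpa [hx] using neg_nonpos.mp this
  -- diagonal of the inverse is positive
  have hinv : M⁻¹.PosDef := hM.inv
  have hdiag : ∀ i, 0 < M⁻¹ i i := by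
    intro i
    have := hinv.dotProduct_mulVec_pos (x := Pi.single i 1) (by
      intro h
      have := congrFun h i
      simp [Pi.single_apply] at this)
    simpa [dotProduct, mulVec, Pi.single_apply] using this
  refine ⟨hdiag, ?_⟩
  -- step lemma
  have hstep : ∀ i k j : Fin n, i ≠ k → M i k ≠ 0 → 0 < M⁻¹ k j → 0 < M⁻¹ i j := by
    intro i k j hik hMik hpos
    have hrow : ∑ l, M i l * M⁻¹ l j = (1 : Matrix (Fin n) (Fin n) ℝ) i j := by
      have : (M * M⁻¹) i j = (1 : Matrix (Fin n) (Fin n) ℝ) i j := by rw [hMul]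
      simpa [Matrix.mul_apply] using this
    have hsplit : M i i * M⁻¹ i j =
        (1 : Matrix (Fin n) (Fin n) ℝ) i j + ∑ l ∈ Finset.univ.erase i, (-(M i l)) * M⁻¹ l j := by
      have := Finset.sum_erase_add Finset.univ (fun l => M i l * M⁻¹ l j) (Finset.mem_univ i)
      rw [← hrow, ← this]
      rw [Finset.sum_congr rfl (fun l _ => by ring : ∀ l ∈ Finset.univ.erase i, (-(M i l)) * M⁻¹ l j = -(M i l * M⁻¹ l j)), Finset.sum_neg_distrib]
      ring
    have hterm : ∀ l ∈ Finset.univ.erase i, 0 ≤ (-(M i l)) * M⁻¹ l j := by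
      intro l hl
      have hil : l ≠ i := Finset.ne_of_mem_erase hl
      exact mul_nonneg (neg_nonneg.mpr (hZ i l (Ne.symm hil))) (hnonneg l j)
    have hk : 0 < (-(M i k)) * M⁻¹ k j := by
      have hMik' : M i k < 0 := lt_of_le_of_ne (hZ i k hik) hMik
      exact mul_pos (by linarith) hpos
    have hone : 0 ≤ (1 : Matrix (Fin n) (Fin n) ℝ) i j := by
      rcases eq_or_ne i j with rfl | h
      · simp
      · simp [Matrix.one_apply_ne h]
    have hsum : 0 < ∑ l ∈ Finset.univ.erase i, (-(M i l)) * M⁻¹ l j := by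
      apply Finset.sum_pos' hterm
      exact ⟨k, Finset.mem_erase.mpr ⟨Ne.symm hik, Finset.mem_univ k⟩, hk⟩
    have h2 : 0 < M i i * M⁻¹ i j := by rw [hsplit]; linarith
    nlinarith [hMdiag i, hnonneg i j]
  -- induction along walks
  rintro i j ⟨r, k, hk0, hkr, hedge⟩
  clear hpd hsym
  induction r generalizing i k with
  | zero => subst hk0; subst hkr; exact hdiag _
  | succ r ih =>
    have h1 : 0 < M⁻¹ (k 1) j := by
      refine ih (k 1) (fun t => k (t + 1)) rfl ?_ ?_
      · simpa using hkr
      · intro t ht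
        exact hedge (t + 1) (by omega)
    rcases eq_or_ne i (k 1) with rfl | hne
    · exact h1
    · exact hstep i (k 1) j hne (hk0 ▸ hedge 0 (Nat.succ_pos r)) h1
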